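/- Second-order accuracy of the well-balanced quadrature: if α, β, y are smooth (C²) with α nowhere zero on [x₀, x₀+h], then Q = (1/2)(y(x₀)/α(x₀) + y(x₀+h)/α(x₀+h))·(β(x₀+h) - β(x₀))/h differs from (1/h)∫_{x₀}^{x₀+h} y(x)·β'(x)/α(x) dx by O(h²) as h → 0. -/

import Mathlib

open MeasureTheory intervalIntegral Asymptotics Set


lemma aux_taylor {f : ℝ → ℝ} (hf : Differentiable ℝ f) (hf' : Differentiable ℝ (deriv f))
    {M a t : ℝ} (ht : 0 ≤ t) (hM : ∀ x ∈ Icc a (a + t), |deriv (deriv f) x| ≤ M) :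
    |f (a + t) - f a - deriv f (a + t) * t| ≤ M * t ^ 2 := by
  have hconv : Convex ℝ (Icc a (a + t)) := convex_Icc _ _
  have hmem : ∀ x ∈ Icc a (a + t), |x - (a + t)| ≤ t := by
    intro x hx
    rw [abs_sub_le_iff]
    constructor <;> [linarith [hx.1, hx.2]; linarith [hx.1, hx.2]]
  -- step 1: deriv f is (M*t)-close to its value at a+t on the interval
  have step1 : ∀ x ∈ Icc a (a + t), |deriv f x - deriv f (a + t)| ≤ M * t := by
    intro x hx
    have h1 : ‖deriv f x - deriv f (a + t)‖ ≤ M * ‖x - (a + t)‖ := by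
      have := hconv.norm_image_sub_le_of_norm_hasDerivWithin_le
        (f := deriv f) (f' := deriv (deriv f))
        (fun z hz => ((hf' z).hasDerivAt).hasDerivWithinAt)
        (fun z hz => by simpa using hM z hz)
        (right_mem_Icc.mpr (by linarith)) hx
      simpa [norm_sub_rev] using this
    have hMnn : 0 ≤ M := le_trans (abs_nonneg _) (hM (a + t) (right_mem_Icc.mpr (by linarith)))
    calc |deriv f x - deriv f (a + t)| ≤ M * |x - (a + t)| := h1
      _ ≤ M * t := by exact mul_le_mul_of_nonneg_left (hmem x hx) hMnn
  -- step 2: apply MVT to x ↦ f x - deriv f (a+t) * x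
  have step2 : ‖(f (a + t) - deriv f (a + t) * (a + t)) - (f a - deriv f (a + t) * a)‖
      ≤ M * t * ‖(a + t) - a‖ := by
    apply hconv.norm_image_sub_le_of_norm_hasDerivWithin_le
      (f := fun x => f x - deriv f (a + t) * x)
      (f' := fun x => deriv f x - deriv f (a + t))
      (fun z hz => by
        convert (((hf z).hasDerivAt).sub
          ((hasDerivAt_id z).const_mul (deriv f (a + t)))).hasDerivWithinAt using 1
        · rfl
        · ring)
      (fun z hz => by simpa using step1 z hz)
      (left_mem_Icc.mpr (by linarith)) (right_mem_Icc.mpr (by linarith))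
  have : |f (a + t) - f a - deriv f (a + t) * t| ≤ M * t * t := by
    have he : (f (a + t) - deriv f (a + t) * (a + t)) - (f a - deriv f (a + t) * a)
        = f (a + t) - f a - deriv f (a + t) * t := by ring
    have ht' : ‖(a + t) - a‖ = t := by simp [Real.norm_eq_abs, abs_of_nonneg ht]
    rw [he, ht'] at step2
    exact step2
  calc _ ≤ M * t * t := this
    _ = M * t ^ 2 := by ring


lemma aux_contdiff_deriv {f : ℝ → ℝ} (hf : ContDiff ℝ 2 f) : ContDiff ℝ 1 (deriv f) := by
  have : ContDiff ℝ ((1:ℕ∞)+1) f := by exact_mod_cast hf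
  exact_mod_cast (contDiff_succ_iff_deriv.mp this).2.2

/-- Second-order accuracy of the well-balanced quadrature: for C² functions
α, β, y with α nowhere zero, the trapezoid-type rule
Q(h) = (1/2)(y(x₀)/α(x₀)+y(x₀+h)/α(x₀+h))·(β(x₀+h)-β(x₀))/h differs from the
exact cell average (1/h)∫_{x₀}^{x₀+h} y β'/α by O(h²) as h → 0⁺. -/
theorem stmt_11 (α β y : ℝ → ℝ)
    (hα : ContDiff ℝ 2 α) (hβ : ContDiff ℝ 2 β) (hy : ContDiff ℝ 2 y)
    (hα0 : ∀ x, α x ≠ 0) (x₀ : ℝ) :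
    (fun h : ℝ =>
        (1 / 2) * (y x₀ / α x₀ + y (x₀ + h) / α (x₀ + h))
            * (β (x₀ + h) - β x₀) / h
          - (1 / h) * ∫ x in x₀..(x₀ + h), y x * deriv β x / α x)
      =O[nhdsWithin 0 (Set.Ioi 0)] (fun h : ℝ => h ^ 2) := by
  set f : ℝ → ℝ := fun x => y x / α x with hfdef
  have hf : ContDiff ℝ 2 f := hy.div hα hα0
  have hfd : Differentiable ℝ f := hf.differentiable (by norm_num)
  have hf1 : ContDiff ℝ 1 (deriv f) := aux_contdiff_deriv hf
  have hf'd : Differentiable ℝ (deriv f) := hf1.differentiable one_ne_zero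
  have hf''c : Continuous (deriv (deriv f)) := hf1.continuous_deriv le_rfl
  have hf'c : Continuous (deriv f) := hf.continuous_deriv (by norm_num)
  have hβd : Differentiable ℝ β := hβ.differentiable (by norm_num)
  have hβ1 : ContDiff ℝ 1 (deriv β) := aux_contdiff_deriv hβ
  have hβ'd : Differentiable ℝ (deriv β) := hβ1.differentiable one_ne_zero
  have hβ''c : Continuous (deriv (deriv β)) := hβ1.continuous_deriv le_rfl
  have hβ'c : Continuous (deriv β) := hβ.continuous_deriv (by norm_num)
  -- bounds on compact set
  obtain ⟨M₁, hM₁⟩ := (isCompact_Icc (a := x₀ - 1) (b := x₀ + 1)).exists_bound_of_continuousOn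
    ((hf'c.abs.add hβ'c.abs).continuousOn)
  obtain ⟨M₂, hM₂⟩ := (isCompact_Icc (a := x₀ - 1) (b := x₀ + 1)).exists_bound_of_continuousOn
    ((hf''c.abs.add hβ''c.abs).continuousOn)
  -- g
  set g : ℝ → ℝ := fun x => f x * deriv β x with hgdef
  have hgc : Continuous g := hf.continuous.mul hβ'c
  -- Phi and its derivative
  set Φ : ℝ → ℝ := fun h => (f x₀ + f (x₀ + h)) / 2 * (β (x₀ + h) - β x₀)
    - ∫ x in x₀..(x₀ + h), g x with hΦdef
  set Φ' : ℝ → ℝ := fun h => deriv f (x₀ + h) / 2 * (β (x₀ + h) - β x₀)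
    + (f x₀ - f (x₀ + h)) / 2 * deriv β (x₀ + h) with hΦ'def
  have hΦderiv : ∀ h : ℝ, HasDerivAt Φ (Φ' h) h := by
    intro h
    have h1 : HasDerivAt (fun h : ℝ => x₀ + h) 1 h := (hasDerivAt_id h).const_add x₀
    have h2 : HasDerivAt (fun h : ℝ => f (x₀ + h)) (deriv f (x₀ + h)) h := by
      have := ((hfd (x₀ + h)).hasDerivAt.comp h h1); simp only [mul_one] at this; exact this
    have h3 : HasDerivAt (fun h : ℝ => β (x₀ + h)) (deriv β (x₀ + h)) h := by
      have := ((hβd (x₀ + h)).hasDerivAt.comp h h1); simp only [mul_one] at this; exact this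
    have h4 : HasDerivAt (fun u => ∫ x in x₀..u, g x) (g (x₀ + h)) (x₀ + h) :=
      intervalIntegral.integral_hasDerivAt_right (hgc.intervalIntegrable _ _)
        (hgc.stronglyMeasurableAtFilter _ _) hgc.continuousAt
    have h5 : HasDerivAt (fun h : ℝ => ∫ x in x₀..(x₀ + h), g x) (g (x₀ + h)) h := by
      have := h4.comp h h1; simp only [mul_one] at this; exact this
    have h6 : HasDerivAt (fun h : ℝ => (f x₀ + f (x₀ + h)) / 2 * (β (x₀ + h) - β x₀))
        ((deriv f (x₀ + h) / 2) * (β (x₀ + h) - β x₀)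
          + (f x₀ + f (x₀ + h)) / 2 * deriv β (x₀ + h)) h := by
      have := (((hasDerivAt_const h (f x₀)).add h2).div_const 2).mul
        (h3.sub (hasDerivAt_const h (β x₀)))
      exact this.congr_deriv (by simp only [Pi.add_apply, Pi.sub_apply]; ring)
    have := h6.sub h5
    exact this.congr_deriv (by simp only [hΦ'def, hgdef]; ring)
  -- nonnegativity and extraction of bounds
  have hmem0 : x₀ ∈ Icc (x₀ - 1) (x₀ + 1) := by constructor <;> linarith
  have hM₁0 : 0 ≤ M₁ := le_trans (norm_nonneg _) (hM₁ x₀ hmem0)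
  have hM₂0 : 0 ≤ M₂ := le_trans (norm_nonneg _) (hM₂ x₀ hmem0)
  have hbf' : ∀ x ∈ Icc (x₀ - 1) (x₀ + 1), |deriv f x| ≤ M₁ := by
    intro x hx
    have := hM₁ x hx
    simp only [Pi.add_apply] at this
    rw [Real.norm_eq_abs, abs_of_nonneg (by positivity)] at this
    have h0 : (0:ℝ) ≤ |deriv β x| := abs_nonneg _
    linarith
  have hbβ' : ∀ x ∈ Icc (x₀ - 1) (x₀ + 1), |deriv β x| ≤ M₁ := by
    intro x hx
    have := hM₁ x hx
    simp only [Pi.add_apply] at this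
    rw [Real.norm_eq_abs, abs_of_nonneg (by positivity)] at this
    have h0 : (0:ℝ) ≤ |deriv f x| := abs_nonneg _
    linarith
  have hbf'' : ∀ x ∈ Icc (x₀ - 1) (x₀ + 1), |deriv (deriv f) x| ≤ M₂ := by
    intro x hx
    have := hM₂ x hx
    simp only [Pi.add_apply] at this
    rw [Real.norm_eq_abs, abs_of_nonneg (by positivity)] at this
    have h0 : (0:ℝ) ≤ |deriv (deriv β) x| := abs_nonneg _
    linarith
  have hbβ'' : ∀ x ∈ Icc (x₀ - 1) (x₀ + 1), |deriv (deriv β) x| ≤ M₂ := by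
    intro x hx
    have := hM₂ x hx
    simp only [Pi.add_apply] at this
    rw [Real.norm_eq_abs, abs_of_nonneg (by positivity)] at this
    have h0 : (0:ℝ) ≤ |deriv (deriv f) x| := abs_nonneg _
    linarith
  -- pointwise bound on Φ'
  have hkey : ∀ t ∈ Icc (0:ℝ) 1, |Φ' t| ≤ M₁ * M₂ * t ^ 2 := by
    intro t ht
    have hsub : Icc x₀ (x₀ + t) ⊆ Icc (x₀ - 1) (x₀ + 1) := by
      apply Icc_subset_Icc <;> linarith [ht.1, ht.2]
    have hmemt : x₀ + t ∈ Icc (x₀ - 1) (x₀ + 1) := by constructor <;> linarith [ht.1, ht.2]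
    have hA : |β (x₀ + t) - β x₀ - deriv β (x₀ + t) * t| ≤ M₂ * t ^ 2 :=
      aux_taylor hβd hβ'd ht.1 (fun x hx => hbβ'' x (hsub hx))
    have hB : |f (x₀ + t) - f x₀ - deriv f (x₀ + t) * t| ≤ M₂ * t ^ 2 :=
      aux_taylor hfd hf'd ht.1 (fun x hx => hbf'' x (hsub hx))
    have hid : Φ' t = (1/2) * (deriv f (x₀ + t) * (β (x₀ + t) - β x₀ - deriv β (x₀ + t) * t)
        - (f (x₀ + t) - f x₀ - deriv f (x₀ + t) * t) * deriv β (x₀ + t)) := by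
      simp only [hΦ'def]; ring
    rw [hid]
    have h1 : |deriv f (x₀ + t)| ≤ M₁ := hbf' _ hmemt
    have h2 : |deriv β (x₀ + t)| ≤ M₁ := hbβ' _ hmemt
    calc |(1/2) * (deriv f (x₀ + t) * (β (x₀ + t) - β x₀ - deriv β (x₀ + t) * t)
        - (f (x₀ + t) - f x₀ - deriv f (x₀ + t) * t) * deriv β (x₀ + t))|
        ≤ (1/2) * (|deriv f (x₀ + t)| * |β (x₀ + t) - β x₀ - deriv β (x₀ + t) * t|
          + |f (x₀ + t) - f x₀ - deriv f (x₀ + t) * t| * |deriv β (x₀ + t)|) := by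
          rw [abs_mul]
          have : |(1:ℝ)/2| = 1/2 := by norm_num
          rw [this]
          gcongr
          calc _ ≤ |deriv f (x₀ + t) * (β (x₀ + t) - β x₀ - deriv β (x₀ + t) * t)|
              + |(f (x₀ + t) - f x₀ - deriv f (x₀ + t) * t) * deriv β (x₀ + t)| := abs_sub _ _
            _ = _ := by rw [abs_mul, abs_mul]
      _ ≤ (1/2) * (M₁ * (M₂ * t ^ 2) + (M₂ * t ^ 2) * M₁) := by
          gcongr
      _ = M₁ * M₂ * t ^ 2 := by ring
  -- continuity of Φ'
  have hΦ'c : Continuous Φ' := by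
    have hc : Continuous (fun h : ℝ => x₀ + h) := continuous_const.add continuous_id
    exact (((hf'c.comp hc).div_const 2).mul ((hβ.continuous.comp hc).sub continuous_const)).add
      (((continuous_const.sub (hf.continuous.comp hc)).div_const 2).mul (hβ'c.comp hc))
  have hΦ0 : Φ 0 = 0 := by simp [hΦdef]
  -- FTC for Φ
  have hFTC : ∀ h : ℝ, Φ h = ∫ t in (0:ℝ)..h, Φ' t := by
    intro h
    have := intervalIntegral.integral_eq_sub_of_hasDerivAt
      (f := Φ) (f' := Φ') (a := 0) (b := h)
      (fun t _ => hΦderiv t) (hΦ'c.intervalIntegrable _ _)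
    rw [this, hΦ0, sub_zero]
  -- bound for Φ on (0,1]
  have hΦbound : ∀ h ∈ Ioc (0:ℝ) 1, |Φ h| ≤ M₁ * M₂ * h ^ 2 * h := by
    intro h hh
    rw [hFTC h]
    have := intervalIntegral.norm_integral_le_of_norm_le_const
      (f := Φ') (a := 0) (b := h) (C := M₁ * M₂ * h ^ 2) ?_
    · rw [Real.norm_eq_abs] at this
      calc |∫ t in (0:ℝ)..h, Φ' t| ≤ M₁ * M₂ * h ^ 2 * |h - 0| := this
        _ = M₁ * M₂ * h ^ 2 * h := by rw [sub_zero, abs_of_pos hh.1]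
    · intro t htmem
      rw [Set.uIoc_of_le (le_of_lt hh.1)] at htmem
      have ht1 : t ∈ Icc (0:ℝ) 1 := ⟨le_of_lt htmem.1, le_trans htmem.2 hh.2⟩
      calc ‖Φ' t‖ = |Φ' t| := rfl
        _ ≤ M₁ * M₂ * t ^ 2 := hkey t ht1
        _ ≤ M₁ * M₂ * h ^ 2 := by
            have hth : t ^ 2 ≤ h ^ 2 := by nlinarith [le_of_lt htmem.1, htmem.2]
            exact mul_le_mul_of_nonneg_left hth (by positivity)
  -- conclusion
  rw [Asymptotics.isBigO_iff]
  refine ⟨M₁ * M₂, ?_⟩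
  filter_upwards [Ioc_mem_nhdsGT_of_mem (Set.mem_Ico.mpr ⟨le_refl (0:ℝ), one_pos⟩)] with h hh
  have hh0 : 0 < h := hh.1
  have hint : (∫ x in x₀..(x₀ + h), y x * deriv β x / α x) = ∫ x in x₀..(x₀ + h), g x := by
    apply intervalIntegral.integral_congr
    intro x _
    simp only [hgdef, hfdef]
    rw [div_mul_eq_mul_div]
  have hE : (1 / 2) * (y x₀ / α x₀ + y (x₀ + h) / α (x₀ + h)) * (β (x₀ + h) - β x₀) / h
      - (1 / h) * ∫ x in x₀..(x₀ + h), y x * deriv β x / α x = Φ h / h := by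
    rw [hint]
    simp only [hΦdef, hfdef]
    field_simp
  rw [hE]
  have hb := hΦbound h hh
  rw [Real.norm_eq_abs, Real.norm_eq_abs, abs_div, abs_of_pos hh0]
  rw [div_le_iff₀ hh0]
  calc |Φ h| ≤ M₁ * M₂ * h ^ 2 * h := hb
    _ = M₁ * M₂ * |h ^ 2| * h := by rw [abs_of_nonneg (by positivity)]
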